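/- Let E > 0, K = E/2, and for t ∈ ℝ with |t| < 1/4 define ẑ* = Kt, v̂₂* = E(t + t²/2) − ẑ*, v̂₁* = (ẑ* + v̂₂* + K)t, s = ẑ* + v̂₂* + K. Then the second derivative of the map z ↦ z²/(2K) − (1/2)(v̂₁*)²/(v̂₂* + z + K) − (v̂₂* + z)²/(2E) (the dual functional density in z*) at z = ẑ* equals 2/E − (v̂₁*)²/s³ − 1/E = 1/E − t²/s, which is strictly greater than 5/(7E). -/

import Mathlib

theorem dual_second_derivative_computation
    (E K t z v₂ v₁ s : ℝ) (hE : 0 < E) (hK : K = E / 2) (ht : |t| < 1 / 4)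
    (hz : z = K * t)
    (hv₂ : v₂ = E * (t + t ^ 2 / 2) - z)
    (hv₁ : v₁ = (z + v₂ + K) * t)
    (hs : s = z + v₂ + K) :
    deriv (deriv (fun w : ℝ =>
        w ^ 2 / (2 * K) - (1 / 2) * v₁ ^ 2 / (v₂ + w + K) - (v₂ + w) ^ 2 / (2 * E))) z
      = 2 / E - v₁ ^ 2 / s ^ 3 - 1 / E ∧
    2 / E - v₁ ^ 2 / s ^ 3 - 1 / E = 1 / E - t ^ 2 / s ∧
    1 / E - t ^ 2 / s > 5 / (7 * E) := by
  have ht1 : -(1/4) < t := neg_lt_of_abs_lt ht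
  have ht2 : t < 1/4 := lt_of_abs_lt ht
  have hseq : s = E / 2 * (1 + t) ^ 2 := by
    rw [hs, hv₂, hK]; ring
  have hspos : 0 < s := by
    rw [hseq]
    have h1t : 0 < (1 + t) ^ 2 := by nlinarith
    exact mul_pos (by linarith) h1t
  have hsz : v₂ + z + K = s := by rw [hs]; ring
  have hK2 : K = E / 2 := hK
  have hKpos : 0 < K := by rw [hK]; linarith
  set f : ℝ → ℝ := fun w : ℝ =>
      w ^ 2 / (2 * K) - (1 / 2) * v₁ ^ 2 / (v₂ + w + K) - (v₂ + w) ^ 2 / (2 * E) with hf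
  set g : ℝ → ℝ := fun w : ℝ =>
      w / K + (1 / 2) * v₁ ^ 2 * ((v₂ + w + K) ^ 2)⁻¹ - (v₂ + w) / E with hg
  have key : ∀ w : ℝ, v₂ + w + K ≠ 0 → HasDerivAt f (g w) w := by
    intro w hw
    have h1 : HasDerivAt (fun w : ℝ => w ^ 2 / (2 * K)) (2 * w ^ 1 / (2 * K)) w :=
      (hasDerivAt_pow 2 w).div_const (2 * K)
    have hlin : HasDerivAt (fun w : ℝ => v₂ + w + K) 1 w := by
      simpa using ((hasDerivAt_id w).const_add v₂).add_const K
    have h2 : HasDerivAt (fun w : ℝ => (1 / 2) * v₁ ^ 2 / (v₂ + w + K))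
        ((1 / 2) * v₁ ^ 2 * (-1 / (v₂ + w + K) ^ 2)) w := by
      have := (hlin.inv hw).const_mul ((1 / 2) * v₁ ^ 2)
      simpa [div_eq_mul_inv, neg_div] using this
    have hlin2 : HasDerivAt (fun w : ℝ => v₂ + w) 1 w := by
      simpa using (hasDerivAt_id w).const_add v₂
    have h3 : HasDerivAt (fun w : ℝ => (v₂ + w) ^ 2 / (2 * E))
        ((2 * (v₂ + w) ^ 1 * 1) / (2 * E)) w :=
      (hlin2.pow 2).div_const (2 * E)
    have : HasDerivAt f _ w := (h1.sub h2).sub h3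
    convert this using 1
    have hKne : K ≠ 0 := ne_of_gt hKpos
    have hEne : E ≠ 0 := ne_of_gt hE
    simp only [hg]; field_simp
    ring
  have hnz : v₂ + z + K ≠ 0 := by rw [hsz]; exact ne_of_gt hspos
  have hev : ∀ᶠ w in nhds z, v₂ + w + K ≠ 0 := by
    have hc : ContinuousAt (fun w : ℝ => v₂ + w + K) z := by fun_prop
    exact hc.eventually_ne hnz
  have heq : deriv f =ᶠ[nhds z] g := by
    filter_upwards [hev] with w hw
    exact (key w hw).deriv
  have hderiv2 : deriv (deriv f) z = deriv g z := heq.deriv_eq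
  have hgderiv : HasDerivAt g
      (1 / K + (1 / 2) * v₁ ^ 2 * (-(2 * (v₂ + z + K) ^ 1 * 1) / ((v₂ + z + K) ^ 2) ^ 2)
        - 1 / E) z := by
    have hlin : HasDerivAt (fun w : ℝ => v₂ + w + K) 1 z := by
      simpa using ((hasDerivAt_id z).const_add v₂).add_const K
    have hsq : HasDerivAt (fun w : ℝ => (v₂ + w + K) ^ 2) (2 * (v₂ + z + K) ^ 1 * 1) z :=
      hlin.pow 2
    have hsqne : (v₂ + z + K) ^ 2 ≠ 0 := pow_ne_zero 2 hnz
    have h2 := (hsq.inv hsqne).const_mul ((1 / 2) * v₁ ^ 2)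
    have h1 : HasDerivAt (fun w : ℝ => w / K) (1 / K) z := by
      simpa using (hasDerivAt_id z).div_const K
    have hlin2 : HasDerivAt (fun w : ℝ => (v₂ + w) / E) (1 / E) z := by
      simpa using ((hasDerivAt_id z).const_add v₂).div_const E
    exact (h1.add h2).sub hlin2
  have hval : deriv g z = 2 / E - v₁ ^ 2 / s ^ 3 - 1 / E := by
    rw [hgderiv.deriv, hsz]
    have hsne : s ≠ 0 := ne_of_gt hspos
    have hEne : E ≠ 0 := ne_of_gt hE
    rw [hK2]
    field_simp
    ring
  refine ⟨hderiv2.trans hval, ?_, ?_⟩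
  · have hv1 : v₁ = s * t := by rw [hv₁, hs]
    have hsne : s ≠ 0 := ne_of_gt hspos
    rw [hv1]
    field_simp
    ring
  · have hkey : t ^ 2 / s < 2 / (7 * E) := by
      rw [div_lt_div_iff₀ hspos (by positivity), hseq]
      nlinarith [mul_pos hE (show (0:ℝ) < (1 + t) ^ 2 - 7 * t ^ 2 by
        nlinarith [mul_pos (show (0:ℝ) < 1/4 + t by linarith) (show (0:ℝ) < 1/4 - t by linarith)])]
    have : 5 / (7 * E) = 1 / E - 2 / (7 * E) := by field_simp; ring
    rw [this]
    linarith
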